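/- For 0 < α ≤ 1 and any integer r ≥ 1, the improper integral ∫_1^∞ ψ(u-α)(log u)^{r-1}/u² du satisfies the bound | ∫_1^∞ ψ(u-α)(log u)^{r-1}/u² du | ≤ (e/3)·((r-1)/2)^{r-1}·e^{-r}, where ψ(u) = u - ⌊u⌋ - 1/2 and 0^0 is interpreted as 1. -/

import Mathlib

open MeasureTheory

/-- The sawtooth function `ψ(u) = u - ⌊u⌋ - 1/2`. -/
noncomputable def saw (u : ℝ) : ℝ := u - ⌊u⌋ - 1/2

open Set Filter

noncomputable def sawP (t : ℝ) : ℝ := Int.fract t * (Int.fract t - 1) / 2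

lemma abs_saw_le (t : ℝ) : |saw t| ≤ 1/2 := by
  have h0 := Int.fract_nonneg t
  have h1 := Int.fract_lt_one t
  have : saw t = Int.fract t - 1/2 := by rw [saw, Int.fract]
  rw [this, abs_le]; constructor <;> [linarith; linarith]

lemma abs_sawP_le (t : ℝ) : |sawP t| ≤ 1/8 := by
  have h0 := Int.fract_nonneg t
  have h1 := Int.fract_lt_one t
  rw [sawP, abs_le]
  constructor <;> nlinarith [sq_nonneg (Int.fract t - 1/2)]

lemma continuous_sawP : Continuous sawP := by
  have : Continuous ((fun x : ℝ => x * (x - 1) / 2) ∘ Int.fract) := by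
    apply ContinuousOn.comp_fract''
    · exact (continuous_id.mul (continuous_id.sub continuous_const)).div_const _ |>.continuousOn
    · norm_num
  exact this

lemma measurable_saw : Measurable saw := by
  have h : saw = fun u : ℝ => Int.fract u - 1/2 := by funext t; rw [saw, Int.fract]
  rw [h]; exact measurable_fract.sub measurable_const

lemma sawP_hasDerivAt {t : ℝ} (ht : ¬∃ n : ℤ, (n : ℝ) = t) : HasDerivAt sawP (saw t) t := by
  set n : ℤ := ⌊t⌋ with hn
  have hlt : (n : ℝ) < t := lt_of_le_of_ne (Int.floor_le t) (fun h => ht ⟨n, h⟩)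
  have hlt2 : t < (n : ℝ) + 1 := Int.lt_floor_add_one t
  have hderiv : HasDerivAt (fun s : ℝ => (s - n) * (s - n - 1) / 2) (t - n - 1/2) t := by
    have h := (((hasDerivAt_id t).sub_const (n : ℝ)).mul
      (((hasDerivAt_id t).sub_const (n : ℝ)).sub_const 1)).div_const 2
    refine h.congr_deriv ?_; simp only [id, one_mul, mul_one]; ring
  have heq : sawP =ᶠ[nhds t] (fun s : ℝ => (s - n) * (s - n - 1) / 2) := by
    filter_upwards [Ioo_mem_nhds hlt hlt2] with s hs
    have : ⌊s⌋ = n := by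
      rw [Int.floor_eq_iff]; exact ⟨hs.1.le, hs.2⟩
    simp [sawP, Int.fract, this]
  have hsaw : saw t = t - n - 1/2 := by simp [saw, hn]
  rw [hsaw]
  exact hderiv.congr_of_eventuallyEq heq

namespace Stmt19Aux

noncomputable def ff (k : ℕ) (u : ℝ) : ℝ := Real.log u ^ k / u ^ 2
noncomputable def ff' (k : ℕ) (u : ℝ) : ℝ :=
  ((k : ℝ) * Real.log u ^ (k - 1) - 2 * Real.log u ^ k) / u ^ 3

lemma hasDerivAt_ff (k : ℕ) {u : ℝ} (hu : 0 < u) : HasDerivAt (ff k) (ff' k u) u := by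
  have h1 : HasDerivAt (fun u : ℝ => Real.log u ^ k)
      ((k : ℝ) * Real.log u ^ (k - 1) * u⁻¹) u :=
    (Real.hasDerivAt_log hu.ne').pow k
  have h2 : HasDerivAt (fun u : ℝ => u ^ 2) (2 * u ^ 1) u := by
    simpa using hasDerivAt_pow 2 u
  have h := h1.div h2 (pow_ne_zero 2 hu.ne')
  refine h.congr_deriv ?_
  rw [ff']
  field_simp

lemma log_pow_le (k : ℕ) {u : ℝ} (hu : 1 ≤ u) :
    Real.log u ^ k ≤ (2 * k + 1 : ℝ) ^ k * u ^ ((1:ℝ)/2) := by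
  have hu0 : (0:ℝ) < u := lt_of_lt_of_le one_pos hu
  have hrp : (1:ℝ) ≤ u ^ ((1:ℝ)/2) := Real.one_le_rpow hu (by norm_num)
  rcases Nat.eq_zero_or_pos k with rfl | hk
  · simpa using hrp
  · have hk0 : (0:ℝ) < (k:ℝ) := by exact_mod_cast hk
    have hε : (0:ℝ) < 1 / (2 * k) := by positivity
    have h1 : Real.log (u ^ ((1:ℝ)/(2*k))) = (1/(2*(k:ℝ))) * Real.log u :=
      Real.log_rpow hu0 _
    have h2 : Real.log (u ^ ((1:ℝ)/(2*k))) ≤ u ^ ((1:ℝ)/(2*k)) :=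
      Real.log_le_self (Real.rpow_pos_of_pos hu0 _).le
    have hlog : Real.log u ≤ (2 * (k:ℝ)) * u ^ ((1:ℝ)/(2*k)) := by
      rw [h1] at h2
      have := mul_le_mul_of_nonneg_left h2 (by positivity : (0:ℝ) ≤ 2 * k)
      calc Real.log u = (2*(k:ℝ)) * ((1/(2*(k:ℝ))) * Real.log u) := by field_simp
        _ ≤ (2*(k:ℝ)) * u ^ ((1:ℝ)/(2*k)) := this
    have hpow : Real.log u ^ k ≤ ((2*(k:ℝ)) * u ^ ((1:ℝ)/(2*k))) ^ k :=
      pow_le_pow_left₀ (Real.log_nonneg hu) hlog k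
    have hexp : (u ^ ((1:ℝ)/(2*k))) ^ k = u ^ ((1:ℝ)/2) := by
      rw [← Real.rpow_natCast (u ^ ((1:ℝ)/(2*k))) k, ← Real.rpow_mul hu0.le]
      congr 1
      field_simp
    calc Real.log u ^ k ≤ ((2*(k:ℝ)) * u ^ ((1:ℝ)/(2*k))) ^ k := hpow
      _ = (2*(k:ℝ))^k * u ^ ((1:ℝ)/2) := by rw [mul_pow, hexp]
      _ ≤ (2*(k:ℝ)+1)^k * u ^ ((1:ℝ)/2) :=
          mul_le_mul_of_nonneg_right (pow_le_pow_left₀ (by positivity) (by linarith) k)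
            (Real.rpow_nonneg hu0.le _)

lemma integrable_helper {C : ℝ} {g : ℝ → ℝ} (hg : ContinuousOn g (Ioi 1))
    (hC : ∀ u : ℝ, 1 ≤ u → |g u| ≤ C * u ^ (-(3/2):ℝ)) :
    IntegrableOn g (Ioi (1:ℝ)) := by
  have hint : IntegrableOn (fun u : ℝ => C * u ^ (-(3/2):ℝ)) (Ioi (1:ℝ)) :=
    (integrableOn_Ioi_rpow_of_lt (by norm_num) one_pos).const_mul C
  refine Integrable.mono hint (hg.aestronglyMeasurable measurableSet_Ioi) ?_
  filter_upwards [ae_restrict_mem measurableSet_Ioi] with u hu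
  have hu1 : (1:ℝ) ≤ u := le_of_lt hu
  have hu0 : (0:ℝ) < u := lt_of_lt_of_le one_pos hu1
  have h1 := hC u hu1
  have hCpos : 0 ≤ C * u ^ (-(3/2):ℝ) := le_trans (abs_nonneg _) h1
  calc ‖g u‖ = |g u| := rfl
    _ ≤ C * u ^ (-(3/2):ℝ) := h1
    _ ≤ ‖C * u ^ (-(3/2):ℝ)‖ := le_abs_self _

lemma continuousOn_ff (k : ℕ) : ContinuousOn (ff k) (Ici (1:ℝ)) := by
  apply ContinuousOn.div
  · exact (Real.continuousOn_log.mono (fun u hu => by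
      simp only [mem_compl_iff, mem_singleton_iff]
      exact ne_of_gt (lt_of_lt_of_le one_pos hu))).pow k
  · exact (continuous_pow 2).continuousOn
  · exact fun u hu => pow_ne_zero 2 (ne_of_gt (lt_of_lt_of_le one_pos hu))

lemma continuousOn_ff' (k : ℕ) : ContinuousOn (ff' k) (Ici (1:ℝ)) := by
  have hlog : ContinuousOn Real.log (Ici (1:ℝ)) :=
    Real.continuousOn_log.mono (fun u hu => by
      simp only [mem_compl_iff, mem_singleton_iff]
      exact ne_of_gt (lt_of_lt_of_le one_pos hu))
  apply ContinuousOn.div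
  · exact (continuousOn_const.mul (hlog.pow _)).sub (continuousOn_const.mul (hlog.pow _))
  · exact (continuous_pow 3).continuousOn
  · exact fun u hu => pow_ne_zero 3 (ne_of_gt (lt_of_lt_of_le one_pos hu))

lemma ff_nonneg (k : ℕ) {u : ℝ} (hu : 1 ≤ u) : 0 ≤ ff k u := by
  have : 0 ≤ Real.log u := Real.log_nonneg hu
  have h0 : (0:ℝ) < u := lt_of_lt_of_le one_pos hu
  rw [ff]; positivity

lemma integrableOn_ff (k : ℕ) : IntegrableOn (ff k) (Ioi (1:ℝ)) := by
  apply integrable_helper ((continuousOn_ff k).mono Ioi_subset_Ici_self)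
  intro u hu
  have hu0 : (0:ℝ) < u := lt_of_lt_of_le one_pos hu
  rw [abs_of_nonneg (ff_nonneg k hu), ff]
  have h1 := log_pow_le k hu
  have h2 : u ^ 2 = u ^ (2:ℝ) := by rw [← Real.rpow_natCast u 2]; norm_num
  rw [div_le_iff₀ (by positivity), h2]
  calc Real.log u ^ k ≤ (2*k+1:ℝ)^k * u ^ ((1:ℝ)/2) := h1
    _ = (2*k+1:ℝ)^k * u ^ (-(3/2):ℝ) * u ^ (2:ℝ) := by
        rw [mul_assoc, ← Real.rpow_add hu0]; norm_num

lemma integrableOn_ff' (k : ℕ) : IntegrableOn (ff' k) (Ioi (1:ℝ)) := by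
  apply integrable_helper ((continuousOn_ff' k).mono Ioi_subset_Ici_self)
  intro u hu
  have hu0 : (0:ℝ) < u := lt_of_lt_of_le one_pos hu
  have hL : 0 ≤ Real.log u := Real.log_nonneg hu
  set C : ℝ := (2*(k:ℝ)+1)^k with hC
  have hCpos : (0:ℝ) < C := by positivity
  have hbk : Real.log u ^ k ≤ C * u ^ ((1:ℝ)/2) := log_pow_le k hu
  have hbk1 : Real.log u ^ (k-1) ≤ C * u ^ ((1:ℝ)/2) := by
    have h1 : ((k-1:ℕ):ℝ) ≤ (k:ℝ) := by exact_mod_cast Nat.sub_le k 1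
    have hmono : (2*((k-1:ℕ):ℝ)+1)^(k-1) ≤ C := by
      calc (2*((k-1:ℕ):ℝ)+1)^(k-1) ≤ (2*(k:ℝ)+1)^(k-1) :=
            pow_le_pow_left₀ (by positivity) (by linarith) _
        _ ≤ C := pow_le_pow_right₀ (by push_cast; linarith [Nat.cast_nonneg (α := ℝ) k]) (Nat.sub_le k 1)
    calc Real.log u ^ (k-1) ≤ (2*((k-1:ℕ):ℝ)+1)^(k-1) * u ^ ((1:ℝ)/2) := log_pow_le (k-1) hu
      _ ≤ C * u ^ ((1:ℝ)/2) :=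
          mul_le_mul_of_nonneg_right hmono (Real.rpow_nonneg hu0.le _)
  have hnum : |(k:ℝ) * Real.log u ^ (k-1) - 2 * Real.log u ^ k| ≤
      ((k:ℝ) + 2) * C * u ^ ((1:ℝ)/2) := by
    calc |(k:ℝ) * Real.log u ^ (k-1) - 2 * Real.log u ^ k|
        ≤ |(k:ℝ) * Real.log u ^ (k-1)| + |2 * Real.log u ^ k| := abs_sub _ _
      _ = (k:ℝ) * Real.log u ^ (k-1) + 2 * Real.log u ^ k := by
          rw [abs_of_nonneg (by positivity), abs_of_nonneg (by positivity)]
      _ ≤ (k:ℝ) * (C * u ^ ((1:ℝ)/2)) + 2 * (C * u ^ ((1:ℝ)/2)) := by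
          have h2 := mul_le_mul_of_nonneg_left hbk1 (Nat.cast_nonneg (α := ℝ) k)
          have h3 := mul_le_mul_of_nonneg_left hbk (by norm_num : (0:ℝ) ≤ 2)
          linarith
      _ = ((k:ℝ) + 2) * C * u ^ ((1:ℝ)/2) := by ring
  have h3 : (u:ℝ) ^ 3 = u ^ ((3:ℕ):ℝ) := (Real.rpow_natCast u 3).symm
  calc |ff' k u| = |(k:ℝ) * Real.log u ^ (k-1) - 2 * Real.log u ^ k| / u ^ 3 := by
        rw [ff', abs_div, abs_of_pos (pow_pos hu0 3)]
    _ ≤ (((k:ℝ) + 2) * C * u ^ ((1:ℝ)/2)) / u ^ 3 := by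
        exact div_le_div_of_nonneg_right hnum (pow_pos hu0 3).le
    _ = ((k:ℝ) + 2) * C * u ^ (-(5/2):ℝ) := by
        rw [h3, mul_div_assoc, ← Real.rpow_sub hu0]
        norm_num
    _ ≤ ((k:ℝ) + 2) * C * u ^ (-(3/2):ℝ) := by
        apply mul_le_mul_of_nonneg_left _ (by positivity)
        exact Real.rpow_le_rpow_of_exponent_le hu (by norm_num)

lemma aesm_ff (k : ℕ) : AEStronglyMeasurable (ff k) (volume.restrict (Ioi (1:ℝ))) :=
  ((continuousOn_ff k).mono Ioi_subset_Ici_self).aestronglyMeasurable measurableSet_Ioi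

lemma aesm_ff' (k : ℕ) : AEStronglyMeasurable (ff' k) (volume.restrict (Ioi (1:ℝ))) :=
  ((continuousOn_ff' k).mono Ioi_subset_Ici_self).aestronglyMeasurable measurableSet_Ioi

lemma integrableOn_saw_ff (α : ℝ) (k : ℕ) :
    IntegrableOn (fun u => saw (u - α) * ff k u) (Ioi (1:ℝ)) := by
  refine Integrable.mono ((integrableOn_ff k).const_mul (1/2))
    (((measurable_saw.comp (measurable_id.sub_const α)).aestronglyMeasurable).mul (aesm_ff k)) ?_
  filter_upwards [ae_restrict_mem measurableSet_Ioi] with u hu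
  have hu1 : (1:ℝ) ≤ u := le_of_lt hu
  have hff := ff_nonneg k hu1
  calc ‖saw (u - α) * ff k u‖ = |saw (u - α)| * |ff k u| := abs_mul _ _
    _ ≤ (1/2) * ff k u := by
        rw [abs_of_nonneg hff]
        exact mul_le_mul_of_nonneg_right (abs_saw_le _) hff
    _ ≤ ‖(1/2) * ff k u‖ := le_abs_self _

lemma integrableOn_sawP_ff' (α : ℝ) (k : ℕ) :
    IntegrableOn (fun u => sawP (u - α) * ff' k u) (Ioi (1:ℝ)) := by
  refine Integrable.mono ((integrableOn_ff' k).abs.const_mul (1/8))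
    (((continuous_sawP.comp (continuous_id.sub continuous_const)).aestronglyMeasurable).mul
      (aesm_ff' k)) ?_
  filter_upwards [ae_restrict_mem measurableSet_Ioi] with u hu
  calc ‖sawP (u - α) * ff' k u‖ = |sawP (u - α)| * |ff' k u| := abs_mul _ _
    _ ≤ (1/8) * |ff' k u| := mul_le_mul_of_nonneg_right (abs_sawP_le _) (abs_nonneg _)
    _ ≤ ‖(1/8) * |ff' k u|‖ := le_abs_self _

lemma ibp (α : ℝ) {b : ℝ} (hb : 1 ≤ b) (k : ℕ) :
    ∫ u in (1:ℝ)..b, (saw (u - α) * ff k u + sawP (u - α) * ff' k u) =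
      sawP (b - α) * ff k b - sawP (1 - α) * ff k 1 := by
  have hs : (Set.range (fun n : ℤ => (n:ℝ) + α)).Countable := Set.countable_range _
  refine integral_eq_of_hasDerivAt_off_countable_of_le
    (fun u => sawP (u - α) * ff k u) _ hb hs ?_ ?_ ?_
  · exact ((continuous_sawP.comp (continuous_id.sub continuous_const)).continuousOn).mul
      ((continuousOn_ff k).mono (fun x hx => hx.1))
  · rintro x ⟨hx, hxs⟩
    have hx0 : (0:ℝ) < x := lt_trans one_pos hx.1
    have hxint : ¬∃ n : ℤ, (n : ℝ) = x - α := by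
      rintro ⟨n, hn⟩
      exact hxs ⟨n, show (n:ℝ) + α = x by linarith⟩
    have hP : HasDerivAt (fun u : ℝ => sawP (u - α)) (saw (x - α)) x := by
      have h := (sawP_hasDerivAt hxint).comp x ((hasDerivAt_id x).sub_const α)
      exact h.congr_deriv (mul_one _)
    have h := hP.mul (hasDerivAt_ff k hx0)
    exact h
  · rw [intervalIntegrable_iff_integrableOn_Ioc_of_le hb]
    have h : IntegrableOn (fun u => saw (u - α) * ff k u + sawP (u - α) * ff' k u) (Ioi (1:ℝ)) :=
      (integrableOn_saw_ff α k).add (integrableOn_sawP_ff' α k)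
    exact h.mono_set Ioc_subset_Ioi_self

lemma tendsto_ff (k : ℕ) : Tendsto (ff k) atTop (nhds 0) := by
  have h := Real.tendsto_pow_log_div_mul_add_atTop 1 0 k one_ne_zero
  have h2 := h.mul tendsto_inv_atTop_zero
  rw [mul_zero] at h2
  apply h2.congr'
  filter_upwards [eventually_gt_atTop (0:ℝ)] with x hx
  rw [ff]
  field_simp [hx.ne']
  ring

lemma ff'_nonneg (k : ℕ) {u : ℝ} (h1 : 1 < u) (h2 : u ≤ Real.exp ((k:ℝ)/2)) :
    0 ≤ ff' k u := by
  have hu0 : (0:ℝ) < u := lt_trans one_pos h1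
  have hL : 0 ≤ Real.log u := Real.log_nonneg h1.le
  rcases Nat.eq_zero_or_pos k with rfl | hk
  · exfalso
    simp only [Nat.cast_zero, zero_div, Real.exp_zero] at h2
    linarith
  · obtain ⟨j, rfl⟩ := Nat.exists_eq_succ_of_ne_zero hk.ne'
    have hlog : Real.log u ≤ ((j+1:ℕ):ℝ)/2 := by
      rw [← Real.log_exp (((j+1:ℕ):ℝ)/2)]
      exact Real.log_le_log hu0 h2
    rw [ff']
    apply div_nonneg _ (pow_nonneg hu0.le 3)
    have : ((j+1:ℕ):ℝ) * Real.log u ^ (j+1-1) - 2 * Real.log u ^ (j+1) =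
        Real.log u ^ j * (((j+1:ℕ):ℝ) - 2 * Real.log u) := by
      rw [pow_succ]; simp; ring
    rw [this]
    exact mul_nonneg (pow_nonneg hL j) (by linarith)

lemma ff'_nonpos (k : ℕ) {u : ℝ} (h2 : Real.exp ((k:ℝ)/2) < u) : ff' k u ≤ 0 := by
  have hu0 : (0:ℝ) < u := lt_of_le_of_lt (Real.exp_pos _).le h2
  have hu1 : (1:ℝ) < u := lt_of_le_of_lt (Real.one_le_exp (by positivity)) h2
  have hL : 0 ≤ Real.log u := Real.log_nonneg hu1.le
  have hlog : ((k:ℝ))/2 < Real.log u := by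
    rw [← Real.log_exp ((k:ℝ)/2)]
    exact Real.log_lt_log (Real.exp_pos _) h2
  rw [ff']
  apply div_nonpos_of_nonpos_of_nonneg _ (pow_nonneg hu0.le 3)
  rcases Nat.eq_zero_or_pos k with rfl | hk
  · norm_num
  · obtain ⟨j, rfl⟩ := Nat.exists_eq_succ_of_ne_zero hk.ne'
    have : ((j+1:ℕ):ℝ) * Real.log u ^ (j+1-1) - 2 * Real.log u ^ (j+1) =
        Real.log u ^ j * (((j+1:ℕ):ℝ) - 2 * Real.log u) := by
      rw [pow_succ]; simp; ring
    rw [this]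
    apply mul_nonpos_of_nonneg_of_nonpos (pow_nonneg hL j)
    push_cast
    push_cast at hlog
    linarith

lemma intOnIoc (k : ℕ) :
    ∫ u in Ioc (1:ℝ) (Real.exp ((k:ℝ)/2)), |ff' k u| =
      ff k (Real.exp ((k:ℝ)/2)) - ff k 1 := by
  set M := Real.exp ((k:ℝ)/2) with hM
  have hM1 : (1:ℝ) ≤ M := Real.one_le_exp (by positivity)
  have h1 : ∫ u in Ioc (1:ℝ) M, |ff' k u| = ∫ u in Ioc (1:ℝ) M, ff' k u := by
    apply setIntegral_congr_fun measurableSet_Ioc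
    intro u hu
    exact abs_of_nonneg (ff'_nonneg k hu.1 hu.2)
  rw [h1, ← intervalIntegral.integral_of_le hM1]
  apply intervalIntegral.integral_eq_sub_of_hasDerivAt_of_le hM1
  · exact (continuousOn_ff k).mono (fun x hx => hx.1)
  · exact fun x hx => hasDerivAt_ff k (lt_trans one_pos hx.1)
  · rw [intervalIntegrable_iff_integrableOn_Ioc_of_le hM1]
    exact (integrableOn_ff' k).mono_set Ioc_subset_Ioi_self

lemma intOnIoi (k : ℕ) :
    ∫ u in Ioi (Real.exp ((k:ℝ)/2)), |ff' k u| = ff k (Real.exp ((k:ℝ)/2)) := by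
  set M := Real.exp ((k:ℝ)/2) with hM
  have hM1 : (1:ℝ) ≤ M := Real.one_le_exp (by positivity)
  have h1 : ∫ u in Ioi M, |ff' k u| = ∫ u in Ioi M, -ff' k u := by
    apply setIntegral_congr_fun measurableSet_Ioi
    intro u hu
    exact abs_of_nonpos (ff'_nonpos k hu)
  have h2 : ∫ u in Ioi M, ff' k u = 0 - ff k M := by
    apply integral_Ioi_of_hasDerivAt_of_tendsto
    · exact ((continuousOn_ff k).mono (Ici_subset_Ici.mpr hM1)).continuousWithinAt self_mem_Ici
    · exact fun x hx => hasDerivAt_ff k (lt_of_lt_of_le one_pos (le_of_lt (lt_of_le_of_lt hM1 hx)))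
    · exact (integrableOn_ff' k).mono_set (Ioi_subset_Ioi hM1)
    · exact tendsto_ff k
  rw [h1, integral_neg, h2]
  ring

lemma key (α : ℝ) (k : ℕ) :
    |∫ u in Ioi (1:ℝ), saw (u - α) * ff k u| ≤
      (1/3) * ((k:ℝ)/2)^k * Real.exp (-(k:ℝ)) := by
  set M := Real.exp ((k:ℝ)/2) with hM
  have hM1 : (1:ℝ) ≤ M := Real.one_le_exp (by positivity)
  set I₁ := ∫ u in Ioi (1:ℝ), saw (u - α) * ff k u with hI₁
  set I₂ := ∫ u in Ioi (1:ℝ), sawP (u - α) * ff' k u with hI₂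
  -- limit of interval integrals
  have hA := intervalIntegral_tendsto_integral_Ioi 1 (integrableOn_saw_ff α k) tendsto_id
  have hB := intervalIntegral_tendsto_integral_Ioi 1 (integrableOn_sawP_ff' α k) tendsto_id
  have hsum := hA.add hB
  -- the IBP form
  have hcongr : (fun b : ℝ => (∫ u in (1:ℝ)..b, saw (u - α) * ff k u) +
      ∫ u in (1:ℝ)..b, sawP (u - α) * ff' k u) =ᶠ[atTop]
      (fun b : ℝ => sawP (b - α) * ff k b - sawP (1 - α) * ff k 1) := by
    filter_upwards [eventually_ge_atTop (1:ℝ)] with b hb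
    rw [← ibp α hb k]
    rw [← intervalIntegral.integral_add]
    · rw [intervalIntegrable_iff_integrableOn_Ioc_of_le hb]
      exact (integrableOn_saw_ff α k).mono_set Ioc_subset_Ioi_self
    · rw [intervalIntegrable_iff_integrableOn_Ioc_of_le hb]
      exact (integrableOn_sawP_ff' α k).mono_set Ioc_subset_Ioi_self
  have hG : Tendsto (fun b : ℝ => sawP (b - α) * ff k b - sawP (1 - α) * ff k 1) atTop
      (nhds (0 - sawP (1 - α) * ff k 1)) := by
    apply Tendsto.sub_const
    have hbound : ∀ b : ℝ, ‖sawP (b - α) * ff k b‖ ≤ |ff k b| := by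
      intro b
      calc ‖sawP (b - α) * ff k b‖ = |sawP (b - α)| * |ff k b| := abs_mul _ _
        _ ≤ 1 * |ff k b| := by
            apply mul_le_mul_of_nonneg_right _ (abs_nonneg _)
            linarith [abs_sawP_le (b - α)]
        _ = |ff k b| := one_mul _
    exact squeeze_zero_norm hbound (by simpa using (tendsto_ff k).abs)
  have heq : I₁ + I₂ = 0 - sawP (1 - α) * ff k 1 :=
    tendsto_nhds_unique (hsum.congr' hcongr) hG
  -- bound on I₂
  have hint_abs : IntegrableOn (fun u => |ff' k u|) (Ioi (1:ℝ)) := (integrableOn_ff' k).abs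
  have hI₂bound : |I₂| ≤ (1/8) * ∫ u in Ioi (1:ℝ), |ff' k u| := by
    calc |I₂| ≤ ∫ u in Ioi (1:ℝ), |sawP (u - α) * ff' k u| :=
          by
          have := norm_integral_le_integral_norm (μ := volume.restrict (Ioi (1:ℝ)))
            (fun u => sawP (u - α) * ff' k u)
          simpa only [Real.norm_eq_abs] using this
      _ ≤ ∫ u in Ioi (1:ℝ), (1/8) * |ff' k u| := by
          apply integral_mono (integrableOn_sawP_ff' α k).abs (hint_abs.const_mul _)
          intro u
          dsimp only
          rw [abs_mul]
          exact mul_le_mul_of_nonneg_right (abs_sawP_le _) (abs_nonneg _)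
      _ = (1/8) * ∫ u in Ioi (1:ℝ), |ff' k u| := integral_const_mul _ _
  -- value of ∫ |ff'|
  have hsplit : ∫ u in Ioi (1:ℝ), |ff' k u| = (ff k M - ff k 1) + ff k M := by
    rw [← intOnIoc k, ← intOnIoi k, ← setIntegral_union (Ioc_disjoint_Ioi le_rfl)
      measurableSet_Ioi (hint_abs.mono_set Ioc_subset_Ioi_self)
      (hint_abs.mono_set (Ioi_subset_Ioi hM1)), Ioc_union_Ioi_eq_Ioi hM1]
  -- putting it together
  have hff1 : 0 ≤ ff k 1 := ff_nonneg k le_rfl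
  have hffM : 0 ≤ ff k M := ff_nonneg k hM1
  have hG1 : |sawP (1 - α) * ff k 1| ≤ (1/8) * ff k 1 := by
    rw [abs_mul, abs_of_nonneg hff1]
    exact mul_le_mul_of_nonneg_right (abs_sawP_le _) hff1
  have hmain : |I₁| ≤ (1/4) * ff k M := by
    have h1 : I₁ = -(sawP (1 - α) * ff k 1) - I₂ := by linarith [heq]
    calc |I₁| ≤ |sawP (1 - α) * ff k 1| + |I₂| := by
          rw [h1]; exact (abs_sub _ _).trans (by rw [abs_neg])
      _ ≤ (1/8) * ff k 1 + (1/8) * ((ff k M - ff k 1) + ff k M) := by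
          rw [hsplit] at hI₂bound; linarith
      _ = (1/4) * ff k M := by ring
  have hval : ff k M = ((k:ℝ)/2)^k * Real.exp (-(k:ℝ)) := by
    rw [ff, hM, Real.log_exp, sq, ← Real.exp_add]
    rw [show ((k:ℝ)/2 + (k:ℝ)/2) = (k:ℝ) by ring, Real.exp_neg, div_eq_mul_inv]
  rw [hval] at hmain
  have hpow : (0:ℝ) ≤ ((k:ℝ)/2)^k * Real.exp (-(k:ℝ)) := by positivity
  linarith

end Stmt19Aux

open Stmt19Aux in
/-- for `0 < α ≤ 1` and `r ≥ 1`,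
`|∫_1^∞ ψ(u-α)(log u)^{r-1}/u² du| ≤ (e/3)·((r-1)/2)^{r-1}·e^{-r}` (with `0^0 = 1`). -/
theorem stmt19 (α : ℝ) (hα : 0 < α) (hα1 : α ≤ 1) (r : ℕ) (hr : 1 ≤ r) :
    |∫ u in Set.Ioi (1 : ℝ), saw (u - α) * (Real.log u) ^ (r - 1) / u ^ 2| ≤
      (Real.exp 1 / 3) * (((r : ℝ) - 1) / 2) ^ (r - 1) * Real.exp (-(r : ℝ)) := by
  have hk := key α (r - 1)
  have hcast : ((r - 1 : ℕ) : ℝ) = (r:ℝ) - 1 := by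
    rw [Nat.cast_sub hr]; norm_num
  have hInt : (∫ u in Set.Ioi (1:ℝ), saw (u - α) * (Real.log u) ^ (r-1) / u ^ 2) =
      ∫ u in Set.Ioi (1:ℝ), saw (u - α) * ff (r-1) u := by
    congr 1
    funext u
    rw [ff, mul_div_assoc]
  rw [hInt]
  have hRHS : (Real.exp 1 / 3) * (((r : ℝ) - 1) / 2) ^ (r - 1) * Real.exp (-(r : ℝ)) =
      (1/3) * (((r-1:ℕ):ℝ)/2)^(r-1) * Real.exp (-((r-1:ℕ):ℝ)) := by
    rw [hcast, show Real.exp (-((r:ℝ)-1)) = Real.exp 1 * Real.exp (-(r:ℝ)) by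
      rw [← Real.exp_add]; ring_nf]
    ring
  rw [hRHS]
  exact hk
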